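/- Work in R = ℂ[x₀, x₁, x₂, x₃] and let c₀, c₁, λ ∈ ℂ. Define the antisymmetric matrix π with π₀₁ = 0, π₀₂ = c₀x₀x₂, π₀₃ = −c₀x₀x₃, π₁₂ = −c₁x₁x₂, π₁₃ = c₁x₁x₃, π₂₃ = (c₀ − c₁)(x₀² + λx₀x₁ + x₁² + x₂x₃) (and π j i = −π i j). Then the bracket {f, g} = Σ_{i,j} π i j · ∂ᵢf · ∂ⱼg satisfies the Jacobi identity, and π is unimodular: Σ_j ∂ⱼ(π i j) = 0 for every i. -/
import Mathlib


open MvPolynomial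

noncomputable section

/-- The bracket `{f,g} = Σ_{i,j} π i j · ∂ᵢf · ∂ⱼg` determined by a matrix of polynomials. -/
def brkt (π : Fin 4 → Fin 4 → MvPolynomial (Fin 4) ℂ)
    (f g : MvPolynomial (Fin 4) ℂ) : MvPolynomial (Fin 4) ℂ :=
  ∑ i : Fin 4, ∑ j : Fin 4, π i j * pderiv i f * pderiv j g

lemma pdcomm4 (i j : Fin 4) (p : MvPolynomial (Fin 4) ℂ) :
    pderiv i (pderiv j p) = pderiv j (pderiv i p) := by
  induction p using MvPolynomial.induction_on with
  | C a => simp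
  | add p q hp hq => simp [hp, hq]
  | mul_X p k hp =>
    have h2 : ∀ a b c : Fin 4, pderiv a ((Pi.single b 1 : Fin 4 → MvPolynomial (Fin 4) ℂ) c) = 0 := by
      intro a b c
      rcases eq_or_ne c b with rfl | hne
      · simp
      · simp [Pi.single_eq_of_ne hne]
    simp [pderiv_mul, hp, h2]
    ring

set_option maxHeartbeats 4000000

/-- The normal form of the Poisson structures in the component `L(1,1,2)` satisfies the
Jacobi identity and is unimodular. -/
theorem stmt_11 (c₀ c₁ lam : ℂ)
    (π : Fin 4 → Fin 4 → MvPolynomial (Fin 4) ℂ)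
    (hskew : ∀ i j, π j i = - π i j)
    (h01 : π 0 1 = 0)
    (h02 : π 0 2 = C c₀ * (X 0 * X 2))
    (h03 : π 0 3 = - (C c₀ * (X 0 * X 3)))
    (h12 : π 1 2 = - (C c₁ * (X 1 * X 2)))
    (h13 : π 1 3 = C c₁ * (X 1 * X 3))
    (h23 : π 2 3 = C (c₀ - c₁) * (X 0 ^ 2 + C lam * X 0 * X 1 + X 1 ^ 2 + X 2 * X 3)) :
    (∀ f g h : MvPolynomial (Fin 4) ℂ,
      brkt π f (brkt π g h) + brkt π g (brkt π h f) + brkt π h (brkt π f g) = 0) ∧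
    (∀ i : Fin 4, ∑ j : Fin 4, pderiv j (π i j) = 0) := by
  have hdiag : ∀ i, π i i = 0 := by
    intro i
    have h := hskew i i
    have h2 : π i i + π i i = 0 := by nth_rewrite 1 [h]; simp
    exact add_self_eq_zero.mp h2
  have h00 := hdiag 0; have h11 := hdiag 1; have h22 := hdiag 2; have h33 := hdiag 3
  have h10 : π 1 0 = 0 := by rw [hskew, h01, neg_zero]
  have h20 : π 2 0 = -(C c₀ * (X 0 * X 2)) := by rw [hskew, h02]
  have h30 : π 3 0 = C c₀ * (X 0 * X 3) := by rw [hskew, h03, neg_neg]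
  have h21 : π 2 1 = C c₁ * (X 1 * X 2) := by rw [hskew, h12, neg_neg]
  have h31 : π 3 1 = -(C c₁ * (X 1 * X 3)) := by rw [hskew, h13]
  have h32 : π 3 2 = -(C (c₀ - c₁) * (X 0 ^ 2 + C lam * X 0 * X 1 + X 1 ^ 2 + X 2 * X 3)) := by
    rw [hskew, h23]
  constructor
  · intro f g h
    simp only [brkt, Fin.sum_univ_four, h00, h01, h02, h03, h10, h11, h12, h13, h20, h21,
      h22, h23, h30, h31, h32, h33]
    simp only [map_add, map_neg, map_mul, pderiv_mul, pderiv_pow, pderiv_C, pderiv_X_self,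
      pderiv_X_of_ne (by decide : (0:Fin 4) ≠ 1), pderiv_X_of_ne (by decide : (0:Fin 4) ≠ 2),
      pderiv_X_of_ne (by decide : (0:Fin 4) ≠ 3), pderiv_X_of_ne (by decide : (1:Fin 4) ≠ 0),
      pderiv_X_of_ne (by decide : (1:Fin 4) ≠ 2), pderiv_X_of_ne (by decide : (1:Fin 4) ≠ 3),
      pderiv_X_of_ne (by decide : (2:Fin 4) ≠ 0), pderiv_X_of_ne (by decide : (2:Fin 4) ≠ 1),
      pderiv_X_of_ne (by decide : (2:Fin 4) ≠ 3), pderiv_X_of_ne (by decide : (3:Fin 4) ≠ 0),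
      pderiv_X_of_ne (by decide : (3:Fin 4) ≠ 1), pderiv_X_of_ne (by decide : (3:Fin 4) ≠ 2),
      mul_zero, zero_mul, mul_one, one_mul, add_zero, zero_add, neg_zero, mul_neg, neg_mul,
      neg_neg]
    simp only [pdcomm4 1 0, pdcomm4 2 0, pdcomm4 3 0, pdcomm4 2 1, pdcomm4 3 1, pdcomm4 3 2]
    ring
  · have e0 : ∑ j : Fin 4, pderiv j (π 0 j) = 0 := by
      simp only [Fin.sum_univ_four, h00, h01, h02, h03]
      simp [pderiv_mul, pderiv_X_of_ne]
      try ring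
    have e1 : ∑ j : Fin 4, pderiv j (π 1 j) = 0 := by
      simp only [Fin.sum_univ_four, h10, h11, h12, h13]
      simp [pderiv_mul, pderiv_X_of_ne]
      try ring
    have e2 : ∑ j : Fin 4, pderiv j (π 2 j) = 0 := by
      simp only [Fin.sum_univ_four, h20, h21, h22, h23]
      simp [pderiv_mul, pderiv_X_of_ne, pderiv_pow]
      try ring
    have e3 : ∑ j : Fin 4, pderiv j (π 3 j) = 0 := by
      simp only [Fin.sum_univ_four, h30, h31, h32, h33]
      simp [pderiv_mul, pderiv_X_of_ne, pderiv_pow]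
      try ring
    intro i
    fin_cases i
    · exact e0
    · exact e1
    · exact e2
    · exact e3

end
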